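/- Let a, b, c ∈ ℝ_+^N be vectors of non-negative reals each arranged in descending order. If a is multiplicatively majorized by b (i.e., ∏_{k=1}^K a_k ≤ ∏_{k=1}^K b_k for all 1 ≤ K < N and ∏_{k=1}^N a_k = ∏_{k=1}^N b_k), then ∏_{k=1}^N (a_k + c_{N+1-k}) ≤ ∏_{k=1}^N (b_k + c_{N+1-k}). -/

import Mathlib

open BigOperators Finset

/-- Tangent-line bound: `log(B+d) - log(A+d) ≥ (A/(A+d)) (log B - log A)`. -/
private lemma tangent_log (A B d : ℝ) (hA : 0 < A) (hB : 0 < B) (hd : 0 ≤ d) :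
    A / (A + d) * (Real.log B - Real.log A) ≤ Real.log (B + d) - Real.log (A + d) := by
  have hAd : 0 < A + d := by linarith
  have hBd : 0 < B + d := by linarith
  set p := A / (A + d) with hp
  have hp0 : 0 ≤ p := div_nonneg hA.le hAd.le
  have hp1 : p ≤ 1 := (div_le_one hAd).2 (by linarith)
  have hz : 0 < B / A := div_pos hB hA
  have key : (B / A) ^ p ≤ (B + d) / (A + d) := by
    have h := Real.geom_mean_le_arith_mean2_weighted hp0 (by linarith : (0:ℝ) ≤ 1 - p)
      hz.le zero_le_one (by ring)
    rw [Real.one_rpow, mul_one] at h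
    have : p * (B / A) + (1 - p) * 1 = (B + d) / (A + d) := by
      rw [hp]; field_simp; ring
    linarith [h, this.symm.le, this.le]
  have hlog := Real.log_le_log (Real.rpow_pos_of_pos hz p) key
  rw [Real.log_rpow hz, Real.log_div hB.ne' hA.ne', Real.log_div hBd.ne' hAd.ne'] at hlog
  linarith

/-- Abel summation inequality. -/
private lemma abel_aux (α t : ℕ → ℝ) (hα : Antitone α) :
    ∀ n : ℕ, (∀ K ≤ n, 0 ≤ ∑ k ∈ range K, t k) →
      α n * ∑ k ∈ range n, t k ≤ ∑ k ∈ range n, α k * t k := by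
  intro n
  induction n with
  | zero => simp
  | succ n ih =>
    intro hT
    have h1 := ih (fun K hK => hT K (hK.trans n.le_succ))
    have h2 : 0 ≤ ∑ k ∈ range (n+1), t k := hT (n+1) le_rfl
    rw [Finset.sum_range_succ, Finset.sum_range_succ (fun k => α k * t k)]
    have h3 : α (n+1) * ((∑ k ∈ range n, t k) + t n) ≤
        α n * ((∑ k ∈ range n, t k) + t n) := by
      apply mul_le_mul_of_nonneg_right (hα n.le_succ)
      rw [← Finset.sum_range_succ]; exact h2
    nlinarith [h1, h3]

/-- Core lemma: positive case, weak multiplicative majorization. -/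
private lemma core_pos (a b d : ℕ → ℝ) (n : ℕ)
    (ha : ∀ k < n, 0 < a k) (hb : ∀ k < n, 0 < b k) (hd : ∀ k < n, 0 ≤ d k)
    (haA : ∀ j k, j ≤ k → k < n → a k ≤ a j)
    (hdM : ∀ j k, j ≤ k → k < n → d j ≤ d k)
    (hmaj : ∀ K ≤ n, ∏ k ∈ range K, a k ≤ ∏ k ∈ range K, b k) :
    ∏ k ∈ range n, (a k + d k) ≤ ∏ k ∈ range n, (b k + d k) := by
  have hadpos : ∀ k < n, 0 < a k + d k := fun k hk => by
    have := ha k hk; have := hd k hk; linarith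
  have hbdpos : ∀ k < n, 0 < b k + d k := fun k hk => by
    have := hb k hk; have := hd k hk; linarith
  have hPA : 0 < ∏ k ∈ range n, (a k + d k) :=
    Finset.prod_pos (fun k hk => hadpos k (mem_range.1 hk))
  have hPB : 0 < ∏ k ∈ range n, (b k + d k) :=
    Finset.prod_pos (fun k hk => hbdpos k (mem_range.1 hk))
  rw [← Real.log_le_log_iff hPA hPB,
    Real.log_prod (fun k hk => (hadpos k (mem_range.1 hk)).ne'),
    Real.log_prod (fun k hk => (hbdpos k (mem_range.1 hk)).ne'),
    ← sub_nonneg, ← Finset.sum_sub_distrib]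
  -- the weights
  set α : ℕ → ℝ := fun k => if h : k < n then a k / (a k + d k) else 0 with hαdef
  set t : ℕ → ℝ := fun k => Real.log (b k) - Real.log (a k) with htdef
  have hαanti : Antitone α := by
    intro j k hjk
    by_cases hk : k < n
    · have hj : j < n := lt_of_le_of_lt hjk hk
      simp only [hαdef, dif_pos hk, dif_pos hj]
      rw [div_le_div_iff₀ (hadpos k hk) (hadpos j hj)]
      have h1 : a k ≤ a j := haA j k hjk hk
      have h2 : d j ≤ d k := hdM j k hjk hk
      have := (ha k hk).le; have := (hd j hj)
      nlinarith
    · simp only [hαdef, dif_neg hk]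
      by_cases hj : j < n
      · simp only [dif_pos hj]
        exact div_nonneg (ha j hj).le (hadpos j hj).le
      · simp [dif_neg hj]
  have hT : ∀ K ≤ n, 0 ≤ ∑ k ∈ range K, t k := by
    intro K hK
    have hpa : 0 < ∏ k ∈ range K, a k :=
      Finset.prod_pos (fun k hk => ha k (lt_of_lt_of_le (mem_range.1 hk) hK))
    have h := Real.log_le_log hpa (hmaj K hK)
    rw [Real.log_prod (fun k hk => (ha k (lt_of_lt_of_le (mem_range.1 hk) hK)).ne'),
      Real.log_prod (fun k hk => (hb k (lt_of_lt_of_le (mem_range.1 hk) hK)).ne')] at h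
    simp only [htdef, Finset.sum_sub_distrib]
    linarith
  have habel := abel_aux α t hαanti n hT
  have hαn : α n = 0 := by simp [hαdef]
  rw [hαn, zero_mul] at habel
  refine le_trans (le_trans habel ?_) le_rfl
  apply Finset.sum_le_sum
  intro k hk
  have hkn := mem_range.1 hk
  simp only [hαdef, htdef, dif_pos hkn]
  exact tangent_log (a k) (b k) (d k) (ha k hkn) (hb k hkn) (hd k hkn)

/-- Weak version with possible zeros. -/
private lemma core_weak (a b d : ℕ → ℝ) :
    ∀ n : ℕ, (∀ k < n, 0 ≤ a k) → (∀ k < n, 0 ≤ b k) → (∀ k < n, 0 ≤ d k) →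
    (∀ j k, j ≤ k → k < n → a k ≤ a j) → (∀ j k, j ≤ k → k < n → b k ≤ b j) →
    (∀ j k, j ≤ k → k < n → d j ≤ d k) →
    (∀ K ≤ n, ∏ k ∈ range K, a k ≤ ∏ k ∈ range K, b k) →
    ∏ k ∈ range n, (a k + d k) ≤ ∏ k ∈ range n, (b k + d k) := by
  intro n
  induction n with
  | zero => intro _ _ _ _ _ _ _; simp
  | succ n ih =>
    intro ha hb hd haA hbA hdM hmaj
    have ha' := fun k (hk : k < n) => ha k (hk.trans n.lt_succ_self)
    have hb' := fun k (hk : k < n) => hb k (hk.trans n.lt_succ_self)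
    have hd' := fun k (hk : k < n) => hd k (hk.trans n.lt_succ_self)
    have haA' := fun j k (hjk : j ≤ k) (hk : k < n) => haA j k hjk (hk.trans n.lt_succ_self)
    have hbA' := fun j k (hjk : j ≤ k) (hk : k < n) => hbA j k hjk (hk.trans n.lt_succ_self)
    have hdM' := fun j k (hjk : j ≤ k) (hk : k < n) => hdM j k hjk (hk.trans n.lt_succ_self)
    have hmaj' := fun K (hK : K ≤ n) => hmaj K (hK.trans n.le_succ)
    have hIH := ih ha' hb' hd' haA' hbA' hdM' hmaj'
    have hPBD : 0 ≤ ∏ k ∈ range n, (b k + d k) :=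
      Finset.prod_nonneg (fun k hk => by
        have := hb' k (mem_range.1 hk); have := hd' k (mem_range.1 hk); linarith)
    by_cases hbn : b n = 0
    · -- then the full a-product is 0, so a n = 0
      have hPB0 : ∏ k ∈ range (n+1), b k = 0 :=
        Finset.prod_eq_zero (self_mem_range_succ n) hbn
      have hPA0 : ∏ k ∈ range (n+1), a k = 0 := by
        have h1 := hmaj (n+1) le_rfl
        have h2 : 0 ≤ ∏ k ∈ range (n+1), a k :=
          Finset.prod_nonneg (fun k hk => ha k (mem_range.1 hk))
        rw [hPB0] at h1; linarith
      obtain ⟨j, hj, haj⟩ := Finset.prod_eq_zero_iff.1 hPA0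
      have han : a n = 0 := by
        have h1 : a n ≤ a j := haA j n (Nat.lt_succ_iff.1 (mem_range.1 hj)) n.lt_succ_self
        have h2 := ha n n.lt_succ_self
        rw [haj] at h1; linarith
      rw [Finset.prod_range_succ, Finset.prod_range_succ, han, hbn, zero_add]
      exact mul_le_mul_of_nonneg_right hIH (hd n n.lt_succ_self)
    · by_cases han : a n = 0
      · rw [Finset.prod_range_succ, Finset.prod_range_succ, han, zero_add]
        apply mul_le_mul hIH (le_add_of_nonneg_left (hb n n.lt_succ_self))
          (hd n n.lt_succ_self) hPBD
      · -- all entries positive: use the core lemma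
        apply core_pos a b d (n+1) ?_ ?_ hd haA hdM hmaj
        · intro k hk
          have h1 : a n ≤ a k := haA k n (Nat.lt_succ_iff.1 hk) n.lt_succ_self
          have h2 := (ha n n.lt_succ_self).lt_of_ne (Ne.symm han)
          -- a k ≥ a n > 0
          have := haA k n (Nat.lt_succ_iff.1 hk) n.lt_succ_self
          exact lt_of_lt_of_le h2 this
        · intro k hk
          have h2 := (hb n n.lt_succ_self).lt_of_ne (Ne.symm hbn)
          exact lt_of_lt_of_le h2 (hbA k n (Nat.lt_succ_iff.1 hk) n.lt_succ_self)

theorem stmt_3 {N : ℕ} (a b c : Fin N → ℝ)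
    (ha0 : ∀ i, 0 ≤ a i) (hb0 : ∀ i, 0 ≤ b i) (hc0 : ∀ i, 0 ≤ c i)
    (ha_desc : Antitone a) (hb_desc : Antitone b) (hc_desc : Antitone c)
    (hmaj : ∀ K < N, ∏ i ∈ Finset.univ.filter (fun i : Fin N => (i : ℕ) < K), a i ≤
      ∏ i ∈ Finset.univ.filter (fun i : Fin N => (i : ℕ) < K), b i)
    (heq : ∏ i : Fin N, a i = ∏ i : Fin N, b i) :
    ∏ k : Fin N, (a k + c k.rev) ≤ ∏ k : Fin N, (b k + c k.rev) := by
  classical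
  set A : ℕ → ℝ := fun k => if h : k < N then a ⟨k, h⟩ else 0 with hA
  set B : ℕ → ℝ := fun k => if h : k < N then b ⟨k, h⟩ else 0 with hB
  set D : ℕ → ℝ := fun k => if h : k < N then c ⟨N - 1 - k, by omega⟩ else 0 with hD
  -- convert products over Fin N to products over range N
  have hconvF : ∀ (f : Fin N → ℝ) (F : ℕ → ℝ),
      (∀ (k : ℕ) (h : k < N), F k = f ⟨k, h⟩) → ∏ i : Fin N, f i = ∏ k ∈ range N, F k := by
    intro f F hF
    rw [← Fin.prod_univ_eq_prod_range F N]
    apply Finset.prod_congr rfl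
    intro i _
    rw [hF i.1 i.2]
  have hfilter : ∀ (f : Fin N → ℝ) (F : ℕ → ℝ), (∀ (k : ℕ) (h : k < N), F k = f ⟨k, h⟩) →
      ∀ K ≤ N, ∏ i ∈ Finset.univ.filter (fun i : Fin N => (i : ℕ) < K), f i
        = ∏ k ∈ range K, F k := by
    intro f F hF K hK
    rw [Finset.prod_filter]
    rw [hconvF (fun i => if (i : ℕ) < K then f i else 1)
        (fun k => if k < K then F k else 1) ?_]
    · have h1 : ∏ k ∈ range K, F k = ∏ k ∈ range K, (if k < K then F k else 1) :=
        Finset.prod_congr rfl (fun x hx => (if_pos (mem_range.1 hx)).symm)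
      have h2 : ∏ k ∈ range K, (if k < K then F k else 1)
          = ∏ k ∈ range N, (if k < K then F k else 1) :=
        Finset.prod_subset (Finset.range_subset_range.2 hK)
          (fun x _ hx => if_neg (fun h => hx (mem_range.2 h)))
      rw [h1, h2]
    · intro k h
      dsimp only
      by_cases hkK : k < K
      · rw [if_pos hkK, if_pos hkK, hF k h]
      · rw [if_neg hkK, if_neg hkK]
  have hAval : ∀ (k : ℕ) (h : k < N), A k = a ⟨k, h⟩ := fun k h => by simp [hA, dif_pos h]
  have hBval : ∀ (k : ℕ) (h : k < N), B k = b ⟨k, h⟩ := fun k h => by simp [hB, dif_pos h]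
  have hADval : ∀ (k : ℕ) (h : k < N), A k + D k = a ⟨k, h⟩ + c (Fin.rev ⟨k, h⟩) := by
    intro k h
    have : (⟨N - 1 - k, by omega⟩ : Fin N) = Fin.rev ⟨k, h⟩ := by
      apply Fin.ext
      rw [Fin.val_rev]
      simp only []
      omega
    simp only [hA, hD, dif_pos h, this]
  have hBDval : ∀ (k : ℕ) (h : k < N), B k + D k = b ⟨k, h⟩ + c (Fin.rev ⟨k, h⟩) := by
    intro k h
    have : (⟨N - 1 - k, by omega⟩ : Fin N) = Fin.rev ⟨k, h⟩ := by
      apply Fin.ext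
      rw [Fin.val_rev]
      simp only []
      omega
    simp only [hB, hD, dif_pos h, this]
  rw [hconvF (fun k => a k + c k.rev) (fun k => A k + D k) hADval,
      hconvF (fun k => b k + c k.rev) (fun k => B k + D k) hBDval]
  apply core_weak A B D N
  · intro k hk; rw [hAval k hk]; exact ha0 _
  · intro k hk; rw [hBval k hk]; exact hb0 _
  · intro k hk; simp only [hD, dif_pos hk]; exact hc0 _
  · intro j k hjk hk
    rw [hAval k hk, hAval j (lt_of_le_of_lt hjk hk)]
    exact ha_desc (show (⟨j, _⟩ : Fin N) ≤ ⟨k, hk⟩ from hjk)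
  · intro j k hjk hk
    rw [hBval k hk, hBval j (lt_of_le_of_lt hjk hk)]
    exact hb_desc (show (⟨j, _⟩ : Fin N) ≤ ⟨k, hk⟩ from hjk)
  · intro j k hjk hk
    have hj : j < N := lt_of_le_of_lt hjk hk
    simp only [hD, dif_pos hk, dif_pos hj]
    exact hc_desc (show (⟨N - 1 - k, by omega⟩ : Fin N) ≤ ⟨N - 1 - j, by omega⟩ from by
      simp only [Fin.mk_le_mk]; omega)
  · intro K hK
    rcases lt_or_eq_of_le hK with hKlt | hKeq
    · rw [← hfilter a A hAval K hK, ← hfilter b B hBval K hK]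
      exact hmaj K hKlt
    · subst hKeq
      rw [← hconvF a A hAval, ← hconvF b B hBval]
      exact le_of_eq heq
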